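/- arXiv:0707.3163 — 3 statements merged into one kernel-verified Lean document; each statement's English description precedes it below -/
import Mathlib

section
/- Let x > 0 and 0 < r < 1 be real numbers, and define Φ : ℂ → ℂ by Φ(z) = z + r²x²/(z − x) + r²x. Then Φ restricts to a holomorphic bijection from the domain D = {z ∈ ℂ : Im z > 0 and |z − x| > rx} onto the upper half plane ℍ = {z ∈ ℂ : Im z > 0}; moreover Φ(0) = 0 and the complex derivative of Φ at 0 equals 1 − r². -/
open Complex Set

/-- For `x > 0` and `0 < r < 1`, the map `Φ(z) = z + r²x²/(z − x) + r²x` restricts to a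
holomorphic bijection from `D = {z : Im z > 0 ∧ |z − x| > rx}` onto the upper half plane
`{z : Im z > 0}`, with `Φ(0) = 0` and `Φ'(0) = 1 − r²`. -/
theorem half_disk_removal_map (x r : ℝ) (hx : 0 < x) (hr0 : 0 < r) (hr1 : r < 1) :
    DifferentiableOn ℂ
      (fun z : ℂ => z + (r : ℂ) ^ 2 * (x : ℂ) ^ 2 / (z - (x : ℂ)) + (r : ℂ) ^ 2 * (x : ℂ))
      {z : ℂ | 0 < z.im ∧ r * x < ‖z - (x : ℂ)‖} ∧
    Set.BijOn
      (fun z : ℂ => z + (r : ℂ) ^ 2 * (x : ℂ) ^ 2 / (z - (x : ℂ)) + (r : ℂ) ^ 2 * (x : ℂ))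
      {z : ℂ | 0 < z.im ∧ r * x < ‖z - (x : ℂ)‖}
      {z : ℂ | 0 < z.im} ∧
    (fun z : ℂ => z + (r : ℂ) ^ 2 * (x : ℂ) ^ 2 / (z - (x : ℂ)) + (r : ℂ) ^ 2 * (x : ℂ)) 0 = 0 ∧
    deriv
      (fun z : ℂ => z + (r : ℂ) ^ 2 * (x : ℂ) ^ 2 / (z - (x : ℂ)) + (r : ℂ) ^ 2 * (x : ℂ))
      0 = 1 - (r : ℂ) ^ 2 := by
  have hxC : (x : ℂ) ≠ 0 := by exact_mod_cast hx.ne'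
  have hrx : 0 < r * x := mul_pos hr0 hx
  set f : ℂ → ℂ :=
    fun z : ℂ => z + (r : ℂ) ^ 2 * (x : ℂ) ^ 2 / (z - (x : ℂ)) + (r : ℂ) ^ 2 * (x : ℂ) with hf
  set D : Set ℂ := {z : ℂ | 0 < z.im ∧ r * x < ‖z - (x : ℂ)‖} with hD
  -- z ∈ D implies z - x ≠ 0
  have hne : ∀ z ∈ D, z - (x : ℂ) ≠ 0 := by
    intro z hz h0
    rcases hz with ⟨-, h2⟩
    rw [h0] at h2
    simp at h2
    linarith
  -- imaginary part formula
  have him : ∀ z : ℂ, (f z).im = z.im - r ^ 2 * x ^ 2 * z.im / Complex.normSq (z - (x : ℂ)) := by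
    intro z
    have h1 : ((r : ℂ) ^ 2 * (x : ℂ) ^ 2) = ((r ^ 2 * x ^ 2 : ℝ) : ℂ) := by push_cast; ring
    have h2 : ((r : ℂ) ^ 2 * (x : ℂ)) = ((r ^ 2 * x : ℝ) : ℂ) := by push_cast; ring
    simp only [hf, h1, h2, Complex.add_im, Complex.div_im, Complex.ofReal_im, Complex.ofReal_re,
      Complex.sub_im, Complex.sub_re]
    ring
  -- MapsTo
  have hnormSq : ∀ z ∈ D, r ^ 2 * x ^ 2 < Complex.normSq (z - (x : ℂ)) := by
    intro z hz
    rcases hz with ⟨-, h2⟩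
    have := Complex.sq_norm (z - (x : ℂ))
    nlinarith [norm_nonneg (z - (x : ℂ))]
  have hmaps : Set.MapsTo f D {z : ℂ | 0 < z.im} := by
    intro z hz
    have h1 := hnormSq z hz
    have h2 : 0 < Complex.normSq (z - (x : ℂ)) := by nlinarith
    have h3 : r ^ 2 * x ^ 2 / Complex.normSq (z - (x : ℂ)) < 1 := (div_lt_one h2).2 h1
    have h4 : 0 < z.im := hz.1
    have h5 := him z
    simp only [Set.mem_setOf_eq]
    rw [h5]
    have : r ^ 2 * x ^ 2 * z.im / Complex.normSq (z - (x : ℂ)) < z.im := by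
      rw [div_lt_iff₀ h2]
      nlinarith
    linarith
  -- InjOn
  have hinj : Set.InjOn f D := by
    intro z₁ hz₁ z₂ hz₂ heq
    have hw₁ : z₁ - (x : ℂ) ≠ 0 := hne z₁ hz₁
    have hw₂ : z₂ - (x : ℂ) ≠ 0 := hne z₂ hz₂
    have key : (z₁ - z₂) * ((z₁ - (x : ℂ)) * (z₂ - (x : ℂ)) - (r : ℂ) ^ 2 * (x : ℂ) ^ 2) = 0 := by
      have := heq
      simp only [hf] at this
      field_simp at this
      linear_combination this
    rcases mul_eq_zero.1 key with h | h
    · exact sub_eq_zero.1 h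
    · exfalso
      have habs : ‖z₁ - (x : ℂ)‖ * ‖z₂ - (x : ℂ)‖ = r ^ 2 * x ^ 2 := by
        have := sub_eq_zero.1 h
        have h2 : ‖(z₁ - (x : ℂ)) * (z₂ - (x : ℂ))‖
            = ‖(r : ℂ) ^ 2 * (x : ℂ) ^ 2‖ := by rw [this]
        rw [norm_mul] at h2
        rw [h2]
        rw [norm_mul, norm_pow, norm_pow, Complex.norm_real, Complex.norm_real,
          Real.norm_of_nonneg hr0.le, Real.norm_of_nonneg hx.le]
      nlinarith [hz₁.2, hz₂.2]
  -- SurjOn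
  have hsurj : Set.SurjOn f D {z : ℂ | 0 < z.im} := by
    intro ζ hζ
    simp only [Set.mem_setOf_eq] at hζ
    set η : ℂ := ζ - (x : ℂ) - (r : ℂ) ^ 2 * (x : ℂ) with hη
    have hηim : η.im = ζ.im := by
      rw [hη]
      simp [Complex.sub_im, ← Complex.ofReal_pow, ← Complex.ofReal_mul]
    obtain ⟨s, hs⟩ := IsAlgClosed.exists_pow_nat_eq
      (η ^ 2 - 4 * ((r : ℂ) ^ 2 * (x : ℂ) ^ 2)) (n := 2) (by norm_num)
    set w₁ : ℂ := (η + s) / 2 with hw₁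
    set w₂ : ℂ := (η - s) / 2 with hw₂
    have hprod : w₁ * w₂ = (r : ℂ) ^ 2 * (x : ℂ) ^ 2 := by
      simp only [hw₁, hw₂]
      linear_combination (-(1 : ℂ)/4) * hs
    have hsum : w₁ + w₂ = η := by simp only [hw₁, hw₂]; ring
    have hsumim : w₁.im + w₂.im = η.im := by
      rw [← Complex.add_im, hsum]
    -- generic step: given a root with positive imaginary part, produce a preimage
    have key : ∀ w w' : ℂ, w * w' = (r : ℂ) ^ 2 * (x : ℂ) ^ 2 → w + w' = η → 0 < w.im →
        ∃ z ∈ D, f z = ζ := by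
      intro w w' hmul hsumw himw
      have hrC : (r : ℂ) ≠ 0 := by exact_mod_cast hr0.ne'
      have hc0 : (r : ℂ) ^ 2 * (x : ℂ) ^ 2 ≠ 0 :=
        mul_ne_zero (pow_ne_zero _ hrC) (pow_ne_zero _ hxC)
      have hw0 : w ≠ 0 := by
        intro h
        rw [h, zero_mul] at hmul
        exact hc0 hmul.symm
      refine ⟨w + (x : ℂ), ?_, ?_⟩
      · -- membership in D
        have hzim : (w + (x : ℂ)).im = w.im := by simp
        have hsub : (w + (x : ℂ)) - (x : ℂ) = w := by ring
        have hfz : f (w + (x : ℂ)) = ζ := by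
          simp only [hf, hsub]
          have : (r : ℂ) ^ 2 * (x : ℂ) ^ 2 / w = w' := by
            rw [← hmul]; field_simp
          rw [this]
          rw [hη] at hsumw
          linear_combination hsumw
        -- use the imaginary part formula to get |w| > rx
        have h1 := him (w + (x : ℂ))
        rw [hfz, hsub, hzim] at h1
        have hns : 0 < Complex.normSq w := Complex.normSq_pos.2 hw0
        have hlt : r ^ 2 * x ^ 2 < Complex.normSq w := by
          by_contra hcon
          push_neg at hcon
          have : r ^ 2 * x ^ 2 * w.im / Complex.normSq w ≥ w.im := by
            rw [ge_iff_le, le_div_iff₀ hns]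
            nlinarith
          nlinarith [hζ]
        rw [hD, Set.mem_setOf_eq]
        refine ⟨by simpa [hzim] using himw, ?_⟩
        rw [hsub]
        have h2 : (r * x) ^ 2 < ‖w‖ ^ 2 := by
          rw [Complex.sq_norm]
          nlinarith
        exact lt_of_pow_lt_pow_left₀ 2 (norm_nonneg w) h2
      · -- value
        have hsub : (w + (x : ℂ)) - (x : ℂ) = w := by ring
        simp only [hf, hsub]
        have : (r : ℂ) ^ 2 * (x : ℂ) ^ 2 / w = w' := by
          rw [← hmul]; field_simp
        rw [this]
        rw [hη] at hsumw
        linear_combination hsumw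
    rcases lt_or_ge 0 w₁.im with h | h
    · obtain ⟨z, hz, hfz⟩ := key w₁ w₂ hprod hsum h
      exact ⟨z, hz, hfz⟩
    · have h2 : 0 < w₂.im := by rw [hηim] at hsumim; linarith
      obtain ⟨z, hz, hfz⟩ := key w₂ w₁ (by rw [mul_comm]; exact hprod)
        (by rw [add_comm]; exact hsum) h2
      exact ⟨z, hz, hfz⟩
  refine ⟨?_, ⟨hmaps, hinj, hsurj⟩, ?_, ?_⟩
  · -- differentiability
    exact (differentiableOn_id.add ((differentiableOn_const _).div
      (differentiableOn_id.sub (differentiableOn_const _)) hne)).add (differentiableOn_const _)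
  · -- value at 0
    simp only [hf]
    rw [zero_sub, div_neg, div_eq_mul_inv, pow_two (x : ℂ), mul_assoc, mul_assoc,
      mul_inv_cancel₀ hxC]
    ring
  · -- derivative at 0
    have h0x : (0 : ℂ) - (x : ℂ) ≠ 0 := by simpa using hxC
    have h1 : HasDerivAt (fun z : ℂ => z - (x : ℂ)) 1 0 := (hasDerivAt_id 0).sub_const _
    have h2 : HasDerivAt (fun z : ℂ => (r : ℂ) ^ 2 * (x : ℂ) ^ 2 / (z - (x : ℂ)))
        ((0 * ((0 : ℂ) - (x : ℂ)) - (r : ℂ) ^ 2 * (x : ℂ) ^ 2 * 1) / ((0 : ℂ) - (x : ℂ)) ^ 2) 0 :=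
      (hasDerivAt_const 0 _).div h1 h0x
    have h3 : HasDerivAt f
        (1 + (0 * ((0 : ℂ) - (x : ℂ)) - (r : ℂ) ^ 2 * (x : ℂ) ^ 2 * 1) / ((0 : ℂ) - (x : ℂ)) ^ 2) 0 :=
      ((hasDerivAt_id 0).add h2).add_const _
    rw [h3.deriv]
    field_simp
    ring
end

section
/- Let a be a real number with 1/4 < a < 1/2, set c̃ₐ = Γ(2a)/(Γ(1 − 2a)·Γ(4a − 1)), let θ ∈ (0,π) and let s ∈ (0,1). Then, with all complex powers taken as principal powers, c̃ₐ·|∫₀ˢ (ρe^{iθ})^{−2a}(1 − ρe^{iθ})^{4a−2} e^{iθ} dρ| ≤ 1 − c̃ₐ·(1 − s)^{4a−1}/(4a − 1). -/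
open Complex Real intervalIntegral

private lemma rb_beta_pointwise (a : ℝ) {x : ℝ} (hx0 : 0 ≤ x) (hx1 : x ≤ 1) :
    (x : ℂ) ^ (((1 - 2*a : ℝ) : ℂ) - 1) * ((1 : ℂ) - (x : ℂ)) ^ (((4*a - 1 : ℝ) : ℂ) - 1)
      = ((x ^ (-(2*a)) * (1 - x) ^ (4*a - 2) : ℝ) : ℂ) := by
  have h1 : ((x ^ (-(2*a)) : ℝ) : ℂ) = (x : ℂ) ^ ((-(2*a) : ℝ) : ℂ) :=
    Complex.ofReal_cpow hx0 _
  have h2 : (((1 - x) ^ (4*a - 2) : ℝ) : ℂ) = ((1 - x : ℝ) : ℂ) ^ ((4*a - 2 : ℝ) : ℂ) :=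
    Complex.ofReal_cpow (by linarith) _
  have e1 : ((1 - 2*a : ℝ) : ℂ) - 1 = ((-(2*a) : ℝ) : ℂ) := by push_cast; ring
  have e2 : ((4*a - 1 : ℝ) : ℂ) - 1 = ((4*a - 2 : ℝ) : ℂ) := by push_cast; ring
  have e3 : ((1 - x : ℝ) : ℂ) = 1 - (x : ℂ) := by push_cast; ring
  rw [Complex.ofReal_mul, h1, h2, e1, e2, e3]

private lemma rb_beta_integrable (a : ℝ) (ha1 : 1 / 4 < a) (ha2 : a < 1 / 2) :
    IntervalIntegrable (fun x : ℝ => x ^ (-(2*a)) * (1 - x) ^ (4*a - 2))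
      MeasureTheory.volume 0 1 := by
  have h := Complex.betaIntegral_convergent (u := ((1 - 2*a : ℝ) : ℂ))
    (v := ((4*a - 1 : ℝ) : ℂ)) (by simpa using by linarith) (by simpa using by linarith)
  have h2 : IntervalIntegrable
      (fun x : ℝ => ((x ^ (-(2*a)) * (1 - x) ^ (4*a - 2) : ℝ) : ℂ))
      MeasureTheory.volume 0 1 := by
    refine h.congr ?_
    intro x hx
    rw [Set.uIoc_of_le (by norm_num : (0:ℝ) ≤ 1)] at hx
    exact rb_beta_pointwise a hx.1.le hx.2
  rw [intervalIntegrable_iff] at h2 ⊢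
  have h3 := h2.re
  simp at h3 ⊢
  exact h3

private lemma rb_beta_value (a : ℝ) (ha1 : 1 / 4 < a) (ha2 : a < 1 / 2) :
    ∫ x in (0:ℝ)..1, x ^ (-(2*a)) * (1 - x) ^ (4*a - 2)
      = Real.Gamma (1 - 2*a) * Real.Gamma (4*a - 1) / Real.Gamma (2*a) := by
  have hs : (0:ℝ) < 1 - 2*a := by linarith
  have ht : (0:ℝ) < 4*a - 1 := by linarith
  have hbeta := Complex.Gamma_mul_Gamma_eq_betaIntegral
    (s := ((1 - 2*a : ℝ) : ℂ)) (t := ((4*a - 1 : ℝ) : ℂ)) (by simpa using hs) (by simpa using ht)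
  have hsum : ((1 - 2*a : ℝ) : ℂ) + ((4*a - 1 : ℝ) : ℂ) = ((2*a : ℝ) : ℂ) := by
    push_cast; ring
  rw [hsum] at hbeta
  have hint : Complex.betaIntegral ((1 - 2*a : ℝ) : ℂ) ((4*a - 1 : ℝ) : ℂ)
      = ((∫ x in (0:ℝ)..1, x ^ (-(2*a)) * (1 - x) ^ (4*a - 2) : ℝ) : ℂ) := by
    rw [Complex.betaIntegral, ← intervalIntegral.integral_ofReal]
    refine intervalIntegral.integral_congr fun x hx => ?_
    rw [Set.uIcc_of_le (by norm_num : (0:ℝ) ≤ 1)] at hx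
    exact rb_beta_pointwise a hx.1 hx.2
  rw [hint, Complex.Gamma_ofReal, Complex.Gamma_ofReal, Complex.Gamma_ofReal] at hbeta
  have hΓpos : 0 < Real.Gamma (2*a) := Real.Gamma_pos_of_pos (by linarith)
  have h2 : Real.Gamma (1 - 2*a) * Real.Gamma (4*a - 1)
      = Real.Gamma (2*a) * ∫ x in (0:ℝ)..1, x ^ (-(2*a)) * (1 - x) ^ (4*a - 2) := by
    have := hbeta
    rw [← Complex.ofReal_mul, ← Complex.ofReal_mul] at this
    exact_mod_cast this
  rw [h2, mul_div_cancel_left₀ _ hΓpos.ne']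

/-- For `1/4 < a < 1/2`, `c̃ₐ = Γ(2a)/(Γ(1 − 2a)Γ(4a − 1))`, `θ ∈ (0,π)` and `s ∈ (0,1)`,
with principal-branch complex powers,
`c̃ₐ·|∫₀ˢ (ρe^{iθ})^{−2a}(1 − ρe^{iθ})^{4a−2} e^{iθ} dρ| ≤ 1 − c̃ₐ·(1 − s)^{4a−1}/(4a − 1)`. -/
theorem normalized_ray_integral_bound (a : ℝ) (ha1 : 1 / 4 < a) (ha2 : a < 1 / 2)
    (θ : ℝ) (hθ0 : 0 < θ) (hθπ : θ < π) (s : ℝ) (hs0 : 0 < s) (hs1 : s < 1) :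
    Real.Gamma (2 * a) / (Real.Gamma (1 - 2 * a) * Real.Gamma (4 * a - 1)) *
        ‖(∫ ρ in (0 : ℝ)..s,
            ((ρ : ℂ) * Complex.exp (θ * Complex.I)) ^ ((-(2 * a) : ℝ) : ℂ) *
              (1 - (ρ : ℂ) * Complex.exp (θ * Complex.I)) ^ ((4 * a - 2 : ℝ) : ℂ) *
              Complex.exp (θ * Complex.I))‖ ≤
      1 - Real.Gamma (2 * a) / (Real.Gamma (1 - 2 * a) * Real.Gamma (4 * a - 1)) *
            ((1 - s) ^ (4 * a - 1) / (4 * a - 1)) := by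
  set c := Real.Gamma (2 * a) / (Real.Gamma (1 - 2 * a) * Real.Gamma (4 * a - 1)) with hc_def
  set g : ℝ → ℝ := fun ρ => ρ ^ (-(2*a)) * (1 - ρ) ^ (4*a - 2) with hg_def
  have hΓ1 : 0 < Real.Gamma (2*a) := Real.Gamma_pos_of_pos (by linarith)
  have hΓ2 : 0 < Real.Gamma (1 - 2*a) := Real.Gamma_pos_of_pos (by linarith)
  have hΓ3 : 0 < Real.Gamma (4*a - 1) := Real.Gamma_pos_of_pos (by linarith)
  have hc : 0 < c := by rw [hc_def]; positivity
  have hg_int : IntervalIntegrable g MeasureTheory.volume 0 1 := rb_beta_integrable a ha1 ha2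
  have hsub1 : Set.uIcc (0:ℝ) s ⊆ Set.uIcc (0:ℝ) 1 := by
    rw [Set.uIcc_of_le hs0.le, Set.uIcc_of_le (by norm_num : (0:ℝ) ≤ 1)]
    exact Set.Icc_subset_Icc le_rfl hs1.le
  have hsub2 : Set.uIcc s (1:ℝ) ⊆ Set.uIcc (0:ℝ) 1 := by
    rw [Set.uIcc_of_le hs1.le, Set.uIcc_of_le (by norm_num : (0:ℝ) ≤ 1)]
    exact Set.Icc_subset_Icc hs0.le le_rfl
  have hg_int1 : IntervalIntegrable g MeasureTheory.volume 0 s := hg_int.mono_set hsub1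
  have hg_int2 : IntervalIntegrable g MeasureTheory.volume s 1 := hg_int.mono_set hsub2
  -- Step 1: modulus bound for the ray integral
  have step1 : ‖
      (∫ ρ in (0 : ℝ)..s,
        ((ρ : ℂ) * Complex.exp (θ * Complex.I)) ^ ((-(2 * a) : ℝ) : ℂ) *
          (1 - (ρ : ℂ) * Complex.exp (θ * Complex.I)) ^ ((4 * a - 2 : ℝ) : ℂ) *
          Complex.exp (θ * Complex.I))‖ ≤ ∫ ρ in (0:ℝ)..s, g ρ := by
    have hbd : ∀ᵐ (t : ℝ) ∂MeasureTheory.volume.restrict (Set.uIoc (0:ℝ) s),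
        ‖((t : ℂ) * Complex.exp (θ * Complex.I)) ^ ((-(2 * a) : ℝ) : ℂ) *
          (1 - (t : ℂ) * Complex.exp (θ * Complex.I)) ^ ((4 * a - 2 : ℝ) : ℂ) *
          Complex.exp (θ * Complex.I)‖ ≤ g t := by
      refine (MeasureTheory.ae_restrict_iff' (measurableSet_uIoc : MeasurableSet (Set.uIoc (0:ℝ) s))).2 (.of_forall fun t ht => ?_)
      rw [Set.uIoc_of_le hs0.le] at ht
      obtain ⟨ht0, hts⟩ := ht
      have ht1 : t < 1 := lt_of_le_of_lt hts hs1
      have habs1 : ‖(t : ℂ) * Complex.exp (θ * Complex.I)‖ = t := by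
        rw [norm_mul, Complex.norm_exp_ofReal_mul_I, mul_one]
        simp [abs_of_pos ht0]
      have hlow : 1 - t ≤ ‖1 - (t : ℂ) * Complex.exp (θ * Complex.I)‖ := by
        have h := norm_sub_norm_le (1 : ℂ) ((t : ℂ) * Complex.exp (θ * Complex.I))
        simpa [habs1, abs_of_pos ht0] using h
      rw [norm_mul, norm_mul, Complex.norm_cpow_real, Complex.norm_cpow_real,
        habs1, Complex.norm_exp_ofReal_mul_I, mul_one]
      exact mul_le_mul_of_nonneg_left
        (Real.rpow_le_rpow_of_nonpos (by linarith) hlow (by linarith))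
        (Real.rpow_nonneg ht0.le _)
    have h := intervalIntegral.norm_integral_le_of_norm_le hs0.le
      (by rw [Set.uIoc_of_le hs0.le] at hbd; exact (MeasureTheory.ae_restrict_iff' measurableSet_Ioc).1 hbd) hg_int1
    exact h
  -- Step 2: split the integral
  have hsplit : ∫ ρ in (0:ℝ)..s, g ρ = (∫ ρ in (0:ℝ)..1, g ρ) - ∫ ρ in s..(1:ℝ), g ρ := by
    rw [← intervalIntegral.integral_add_adjacent_intervals hg_int1 hg_int2]; ring
  -- Step 3: normalization
  have hbase : c * ∫ ρ in (0:ℝ)..1, g ρ = 1 := by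
    rw [hg_def]
    rw [rb_beta_value a ha1 ha2, hc_def]
    field_simp
    rw [mul_comm a 4]; exact div_self hΓ3.ne'
  -- Step 4: tail lower bound
  have htail : (1 - s) ^ (4*a - 1) / (4*a - 1) ≤ ∫ ρ in s..(1:ℝ), g ρ := by
    have hpow_int : IntervalIntegrable (fun ρ : ℝ => (1 - ρ) ^ (4*a - 2))
        MeasureTheory.volume s 1 := by
      have h := (intervalIntegrable_rpow' (a := 1 - s) (b := 1 - 1)
        (by linarith : (-1:ℝ) < 4*a - 2)).comp_sub_left 1
      simpa using h
    have h1 : ∫ ρ in s..(1:ℝ), (1 - ρ) ^ (4*a - 2) = (1 - s) ^ (4*a - 1) / (4*a - 1) := by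
      rw [intervalIntegral.integral_comp_sub_left (fun x => x ^ (4*a - 2)) 1]
      have e : (1:ℝ) - 1 = 0 := by norm_num
      rw [e, integral_rpow (Or.inl (by linarith : (-1:ℝ) < 4*a - 2))]
      have e2 : (4*a - 2) + 1 = 4*a - 1 := by ring
      rw [e2, Real.zero_rpow (by linarith : (4*a - 1) ≠ 0), sub_zero]
    have h2 : ∫ ρ in s..(1:ℝ), (1 - ρ) ^ (4*a - 2) ≤ ∫ ρ in s..(1:ℝ), g ρ := by
      refine intervalIntegral.integral_mono_on hs1.le hpow_int hg_int2 fun x hx => ?_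
      have hx0 : 0 < x := lt_of_lt_of_le hs0 hx.1
      have hone : 1 ≤ x ^ (-(2*a)) :=
        Real.one_le_rpow_of_pos_of_le_one_of_nonpos hx0 hx.2 (by linarith)
      have h1x : 0 ≤ (1 - x) ^ (4*a - 2) := Real.rpow_nonneg (by linarith [hx.2]) _
      calc (1 - x) ^ (4*a - 2) = 1 * (1 - x) ^ (4*a - 2) := (one_mul _).symm
        _ ≤ x ^ (-(2*a)) * (1 - x) ^ (4*a - 2) := mul_le_mul_of_nonneg_right hone h1x
    linarith [h1, h2]
  have hA := mul_le_mul_of_nonneg_left step1 hc.le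
  have hB : c * ∫ ρ in (0:ℝ)..s, g ρ = 1 - c * ∫ ρ in s..(1:ℝ), g ρ := by
    rw [hsplit, mul_sub, hbase]
  have hC := mul_le_mul_of_nonneg_left htail hc.le
  have e : (4 * a - 1 : ℝ) = 4*a - 1 := by ring
  rw [e]
  linarith [hA, hB, hC]
end

section
/- Let a be a real number with 1/4 < a < 1/2, set c̃ₐ = Γ(2a)/(Γ(1 − 2a)·Γ(4a − 1)) and c″ₐ = 2^{1−4a}·c̃ₐ/(4a − 1). Let 0 < r ≤ 1/3, let θ ∈ (0,π), and let s ∈ [1 − 3r/2, 1 − r/2]. Then, with all complex powers taken as principal powers, c̃ₐ·|∫₀ˢ (ρe^{iθ})^{−2a}(1 − ρe^{iθ})^{4a−2} e^{iθ} dρ| ≤ 1 − c″ₐ·r^{4a−1}. -/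
open Complex Real intervalIntegral
open MeasureTheory

open MeasureTheory in
lemma my_beta_integrable {u v : ℝ} (hu : 0 < u) (hv : 0 < v) :
    IntervalIntegrable (fun x : ℝ => x ^ (u - 1) * (1 - x) ^ (v - 1)) volume 0 1 := by
  have h1 : IntervalIntegrable (fun x : ℝ => x ^ (u - 1) * (1 - x) ^ (v - 1))
      volume 0 (1 / 2) := by
    apply (intervalIntegrable_rpow' (by linarith)).mul_continuousOn
    apply ContinuousOn.rpow_const ((continuous_const.sub continuous_id).continuousOn)
    intro x hx
    rw [Set.uIcc_of_le (by norm_num : (0:ℝ) ≤ 1 / 2)] at hx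
    left
    have : x ≤ 1 / 2 := hx.2
    intro h; simp only [Pi.sub_apply, id] at h; linarith
  have h2 : IntervalIntegrable (fun x : ℝ => x ^ (u - 1) * (1 - x) ^ (v - 1))
      volume (1 / 2) 1 := by
    have hb : IntervalIntegrable (fun x : ℝ => (1 - x) ^ (v - 1)) volume (1 / 2) 1 := by
      have := (intervalIntegrable_rpow' (a := 0) (b := 1 / 2)
        (by linarith : (-1:ℝ) < v - 1)).comp_sub_left 1
      norm_num at this
      exact this.symm
    apply hb.continuousOn_mul
    apply ContinuousOn.rpow_const continuousOn_id
    intro x hx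
    rw [Set.uIcc_of_le (by norm_num : (1:ℝ) / 2 ≤ 1)] at hx
    left
    have : (1:ℝ) / 2 ≤ x := hx.1
    simp only [id]; intro h; linarith
  exact h1.trans h2

lemma my_beta_value {u v : ℝ} (hu : 0 < u) (hv : 0 < v) :
    ∫ x in (0:ℝ)..1, x ^ (u - 1) * (1 - x) ^ (v - 1)
      = Real.Gamma u * Real.Gamma v / Real.Gamma (u + v) := by
  have key := Complex.Gamma_mul_Gamma_eq_betaIntegral (s := (u:ℂ)) (t := (v:ℂ))
    (by simpa using hu) (by simpa using hv)
  have h2 : Complex.betaIntegral u v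
      = ((∫ x in (0:ℝ)..1, x ^ (u - 1) * (1 - x) ^ (v - 1) : ℝ) : ℂ) := by
    rw [Complex.betaIntegral, ← intervalIntegral.integral_ofReal]
    apply intervalIntegral.integral_congr
    intro x hx
    rw [Set.uIcc_of_le (by norm_num : (0:ℝ) ≤ 1)] at hx
    have hx0 : (0:ℝ) ≤ x := hx.1
    have hx1 : (0:ℝ) ≤ 1 - x := by linarith [hx.2]
    simp only [Complex.ofReal_mul, Complex.ofReal_cpow hx0, Complex.ofReal_cpow hx1]
    push_cast
    ring
  rw [h2, ← Complex.ofReal_add, Complex.Gamma_ofReal, Complex.Gamma_ofReal,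
    Complex.Gamma_ofReal, ← Complex.ofReal_mul, ← Complex.ofReal_mul] at key
  have key' : Real.Gamma u * Real.Gamma v
      = Real.Gamma (u + v) * ∫ x in (0:ℝ)..1, x ^ (u - 1) * (1 - x) ^ (v - 1) := by
    exact_mod_cast key
  have hG : Real.Gamma (u + v) ≠ 0 := (Real.Gamma_pos_of_pos (by linarith)).ne'
  field_simp [key']
  rw [key']; ring

/-- For `1/4 < a < 1/2`, `c̃ₐ = Γ(2a)/(Γ(1 − 2a)Γ(4a − 1))`,
`c″ₐ = 2^{1−4a}·c̃ₐ/(4a − 1)`, `0 < r ≤ 1/3`, `θ ∈ (0,π)` and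
`s ∈ [1 − 3r/2, 1 − r/2]`, with principal-branch complex powers,
`c̃ₐ·|∫₀ˢ (ρe^{iθ})^{−2a}(1 − ρe^{iθ})^{4a−2} e^{iθ} dρ| ≤ 1 − c″ₐ·r^{4a−1}`. -/
theorem schwarz_christoffel_semicircle_bound (a : ℝ) (ha1 : 1 / 4 < a) (ha2 : a < 1 / 2)
    (r : ℝ) (hr0 : 0 < r) (hr1 : r ≤ 1 / 3)
    (θ : ℝ) (hθ0 : 0 < θ) (hθπ : θ < π)
    (s : ℝ) (hs1 : 1 - 3 * r / 2 ≤ s) (hs2 : s ≤ 1 - r / 2) :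
    Real.Gamma (2 * a) / (Real.Gamma (1 - 2 * a) * Real.Gamma (4 * a - 1)) *
        ‖(∫ ρ in (0 : ℝ)..s,
            ((ρ : ℂ) * Complex.exp (θ * Complex.I)) ^ ((-(2 * a) : ℝ) : ℂ) *
              (1 - (ρ : ℂ) * Complex.exp (θ * Complex.I)) ^ ((4 * a - 2 : ℝ) : ℂ) *
              Complex.exp (θ * Complex.I))‖ ≤
      1 - (2 : ℝ) ^ (1 - 4 * a) *
            (Real.Gamma (2 * a) / (Real.Gamma (1 - 2 * a) * Real.Gamma (4 * a - 1))) /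
            (4 * a - 1) * r ^ (4 * a - 1) := by
  set u : ℝ := 1 - 2 * a with hu_def
  set v : ℝ := 4 * a - 1 with hv_def
  have hu : 0 < u := by simp only [hu_def]; linarith
  have hv : 0 < v := by simp only [hv_def]; linarith
  have hs0 : 0 < s := by linarith
  have hslt : s < 1 := by linarith
  set f : ℝ → ℝ := fun x => x ^ (u - 1) * (1 - x) ^ (v - 1) with hf_def
  have hint01 : IntervalIntegrable f volume 0 1 := my_beta_integrable hu hv
  have hint0s : IntervalIntegrable f volume 0 s := by
    apply hint01.mono_set
    rw [Set.uIcc_of_le hs0.le, Set.uIcc_of_le (by norm_num : (0:ℝ) ≤ 1)]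
    exact Set.Icc_subset_Icc le_rfl hslt.le
  have hints1 : IntervalIntegrable f volume s 1 := by
    apply hint01.mono_set
    rw [Set.uIcc_of_le hslt.le, Set.uIcc_of_le (by norm_num : (0:ℝ) ≤ 1)]
    exact Set.Icc_subset_Icc hs0.le le_rfl
  -- Step A : bound the complex integral by the real one
  have stepA : ‖
      (∫ ρ in (0 : ℝ)..s,
        ((ρ : ℂ) * Complex.exp (θ * Complex.I)) ^ ((-(2 * a) : ℝ) : ℂ) *
          (1 - (ρ : ℂ) * Complex.exp (θ * Complex.I)) ^ ((4 * a - 2 : ℝ) : ℂ) *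
          Complex.exp (θ * Complex.I))‖ ≤ ∫ x in (0:ℝ)..s, f x := by
    have habsE : ‖Complex.exp (θ * Complex.I)‖ = 1 := by
      rw [Complex.norm_exp]; simp
    have hbound : ∀ t ∈ Set.uIoc (0:ℝ) s,
        ‖((t : ℂ) * Complex.exp (θ * Complex.I)) ^ ((-(2 * a) : ℝ) : ℂ) *
          (1 - (t : ℂ) * Complex.exp (θ * Complex.I)) ^ ((4 * a - 2 : ℝ) : ℂ) *
          Complex.exp (θ * Complex.I)‖ ≤ f t := by
      intro t ht
      rw [Set.uIoc_of_le hs0.le] at ht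
      have ht0 : 0 < t := ht.1
      have ht1 : t < 1 := lt_of_le_of_lt ht.2 hslt
      have habs1 : ‖(t : ℂ) * Complex.exp (θ * Complex.I)‖ = t := by
        rw [norm_mul, habsE, Complex.norm_real, Real.norm_eq_abs, abs_of_pos ht0, mul_one]
      have hA : ‖((t : ℂ) * Complex.exp (θ * Complex.I)) ^ ((-(2 * a) : ℝ) : ℂ)‖
          ≤ t ^ (u - 1) := by
        have := Complex.norm_cpow_le ((t : ℂ) * Complex.exp (θ * Complex.I))
          ((-(2 * a) : ℝ) : ℂ)
        simpa [habs1, abs_of_pos ht0, hu_def, show (1 : ℝ) - 2 * a - 1 = -(2*a) by ring] using this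
      have habs2 : 1 - t ≤ ‖1 - (t : ℂ) * Complex.exp (θ * Complex.I)‖ := by
        have := norm_sub_norm_le (1 : ℂ) ((t : ℂ) * Complex.exp (θ * Complex.I))
        simpa [habs1, abs_of_pos ht0] using this
      have hB : ‖(1 - (t : ℂ) * Complex.exp (θ * Complex.I)) ^ ((4 * a - 2 : ℝ) : ℂ)‖
          ≤ (1 - t) ^ (v - 1) := by
        have h1 := Complex.norm_cpow_le (1 - (t : ℂ) * Complex.exp (θ * Complex.I))
          ((4 * a - 2 : ℝ) : ℂ)
        have h2 : ‖1 - (t : ℂ) * Complex.exp (θ * Complex.I)‖ ^ (4 * a - 2 : ℝ)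
            ≤ (1 - t) ^ (4 * a - 2) :=
          Real.rpow_le_rpow_of_nonpos (by linarith) habs2 (by linarith)
        calc ‖(1 - (t : ℂ) * Complex.exp (θ * Complex.I)) ^ ((4 * a - 2 : ℝ) : ℂ)‖
            ≤ ‖1 - (t : ℂ) * Complex.exp (θ * Complex.I)‖ ^ (4 * a - 2 : ℝ) := by
              simpa using h1
          _ ≤ (1 - t) ^ (4 * a - 2) := h2
          _ = (1 - t) ^ (v - 1) := by rw [hv_def]; ring_nf
      calc ‖((t : ℂ) * Complex.exp (θ * Complex.I)) ^ ((-(2 * a) : ℝ) : ℂ) *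
            (1 - (t : ℂ) * Complex.exp (θ * Complex.I)) ^ ((4 * a - 2 : ℝ) : ℂ) *
            Complex.exp (θ * Complex.I)‖
          = ‖((t : ℂ) * Complex.exp (θ * Complex.I)) ^ ((-(2 * a) : ℝ) : ℂ)‖ *
            ‖(1 - (t : ℂ) * Complex.exp (θ * Complex.I)) ^ ((4 * a - 2 : ℝ) : ℂ)‖ * 1 := by
            simp [habsE]
        _ ≤ t ^ (u - 1) * (1 - t) ^ (v - 1) * 1 :=
            mul_le_mul_of_nonneg_right
              (mul_le_mul hA hB (norm_nonneg _) (Real.rpow_nonneg ht0.le _)) zero_le_one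
        _ = f t := by rw [hf_def]; ring
    have := intervalIntegral.norm_integral_le_abs_of_norm_le
      (μ := volume) (a := (0:ℝ)) (b := s)
      (f := fun ρ : ℝ => ((ρ : ℂ) * Complex.exp (θ * Complex.I)) ^ ((-(2 * a) : ℝ) : ℂ) *
        (1 - (ρ : ℂ) * Complex.exp (θ * Complex.I)) ^ ((4 * a - 2 : ℝ) : ℂ) *
        Complex.exp (θ * Complex.I))
      (g := f)
      ((MeasureTheory.ae_restrict_iff' measurableSet_uIoc).2
        (Filter.Eventually.of_forall hbound)) hint0s
    have hnn : 0 ≤ ∫ x in (0:ℝ)..s, f x := by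
      apply intervalIntegral.integral_nonneg hs0.le
      intro x hx
      exact mul_nonneg (Real.rpow_nonneg hx.1 _)
        (Real.rpow_nonneg (by linarith [hx.2]) _)
    calc ‖(∫ ρ in (0 : ℝ)..s,
          ((ρ : ℂ) * Complex.exp (θ * Complex.I)) ^ ((-(2 * a) : ℝ) : ℂ) *
            (1 - (ρ : ℂ) * Complex.exp (θ * Complex.I)) ^ ((4 * a - 2 : ℝ) : ℂ) *
            Complex.exp (θ * Complex.I))‖
        ≤ |∫ x in (0:ℝ)..s, f x| := this
      _ = ∫ x in (0:ℝ)..s, f x := abs_of_nonneg hnn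
  -- Step B : split the full integral
  have stepB : (∫ x in (0:ℝ)..s, f x) + (∫ x in s..(1:ℝ), f x) = ∫ x in (0:ℝ)..1, f x :=
    intervalIntegral.integral_add_adjacent_intervals hint0s hints1
  -- Step C : lower bound on the tail
  have hg_int : IntervalIntegrable (fun x : ℝ => (1 - x) ^ (v - 1)) volume s 1 := by
    have := (intervalIntegrable_rpow' (a := 0) (b := 1 - s)
      (by linarith : (-1:ℝ) < v - 1)).comp_sub_left 1
    norm_num at this
    exact this.symm
  have stepC : (r / 2) ^ v / v ≤ ∫ x in s..(1:ℝ), f x := by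
    have h1 : (∫ x in s..(1:ℝ), (1 - x) ^ (v - 1)) ≤ ∫ x in s..(1:ℝ), f x := by
      apply intervalIntegral.integral_mono_on hslt.le hg_int hints1
      intro x hx
      have hx0 : 0 < x := lt_of_lt_of_le hs0 hx.1
      have hx1 : x ≤ 1 := hx.2
      have hone : (1:ℝ) ≤ x ^ (u - 1) :=
        Real.one_le_rpow_of_pos_of_le_one_of_nonpos hx0 hx1 (by linarith)
      have : (1 - x) ^ (v - 1) * 1 ≤ (1 - x) ^ (v - 1) * x ^ (u - 1) := by
        apply mul_le_mul_of_nonneg_left hone (Real.rpow_nonneg (by linarith) _)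
      simpa [hf_def, mul_comm] using this
    have h2 : (∫ x in s..(1:ℝ), (1 - x) ^ (v - 1)) = (1 - s) ^ v / v := by
      have := intervalIntegral.integral_comp_sub_left (a := s) (b := (1:ℝ))
        (fun y : ℝ => y ^ (v - 1)) 1
      rw [this]
      norm_num
      rw [integral_rpow (Or.inl (by linarith : (-1:ℝ) < v - 1))]
      rw [Real.zero_rpow (by linarith : v - 1 + 1 ≠ 0)]
      norm_num
    have h3 : (r / 2) ^ v ≤ (1 - s) ^ v :=
      Real.rpow_le_rpow (by linarith) (by linarith) hv.le
    calc (r / 2) ^ v / v ≤ (1 - s) ^ v / v := by gcongr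
      _ = ∫ x in s..(1:ℝ), (1 - x) ^ (v - 1) := h2.symm
      _ ≤ ∫ x in s..(1:ℝ), f x := h1
  -- Step D : assemble
  set C : ℝ := Real.Gamma (2 * a) / (Real.Gamma (1 - 2 * a) * Real.Gamma (4 * a - 1)) with hC_def
  have hGu : 0 < Real.Gamma u := Real.Gamma_pos_of_pos hu
  have hGv : 0 < Real.Gamma v := Real.Gamma_pos_of_pos hv
  have hGuv : 0 < Real.Gamma (u + v) := Real.Gamma_pos_of_pos (by linarith)
  have huv : u + v = 2 * a := by rw [hu_def, hv_def]; ring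
  have hG1 : 0 < Real.Gamma (2 * a) := Real.Gamma_pos_of_pos (by linarith)
  have hG2 : 0 < Real.Gamma (1 - 2 * a) := Real.Gamma_pos_of_pos (by linarith)
  have hG3 : 0 < Real.Gamma (4 * a - 1) := Real.Gamma_pos_of_pos (by linarith)
  have hC_pos : 0 < C := by
    rw [hC_def]
    exact div_pos hG1 (mul_pos hG2 hG3)
  have hCB : C * (Real.Gamma u * Real.Gamma v / Real.Gamma (u + v)) = 1 := by
    rw [hC_def, huv, hu_def, hv_def]
    field_simp
    exact div_self (by rw [show a * 4 - 1 = 4 * a - 1 by ring]; exact hG3.ne')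
  have hbeta : ∫ x in (0:ℝ)..1, f x = Real.Gamma u * Real.Gamma v / Real.Gamma (u + v) :=
    my_beta_value hu hv
  have hkey : (∫ x in (0:ℝ)..s, f x)
      ≤ Real.Gamma u * Real.Gamma v / Real.Gamma (u + v) - (r / 2) ^ v / v := by
    rw [← hbeta, ← stepB]
    linarith [stepC]
  have hfinal : C * ∫ x in (0:ℝ)..s, f x ≤ 1 - C * ((r / 2) ^ v / v) := by
    have := mul_le_mul_of_nonneg_left hkey hC_pos.le
    rw [mul_sub, hCB] at this
    linarith
  have hrw : C * ((r / 2) ^ v / v)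
      = (2:ℝ) ^ (1 - 4 * a) * C / (4 * a - 1) * r ^ (4 * a - 1) := by
    have h2v : (r / 2) ^ v = (2:ℝ) ^ (1 - 4 * a) * r ^ v := by
      rw [Real.div_rpow hr0.le (by norm_num : (0:ℝ) ≤ 2)]
      rw [show (1 : ℝ) - 4 * a = -v by rw [hv_def]; ring]
      rw [Real.rpow_neg (by norm_num : (0:ℝ) ≤ 2)]
      ring
    rw [h2v, hv_def]
    ring
  calc C * ‖(∫ ρ in (0 : ℝ)..s,
        ((ρ : ℂ) * Complex.exp (θ * Complex.I)) ^ ((-(2 * a) : ℝ) : ℂ) *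
          (1 - (ρ : ℂ) * Complex.exp (θ * Complex.I)) ^ ((4 * a - 2 : ℝ) : ℂ) *
          Complex.exp (θ * Complex.I))‖
      ≤ C * ∫ x in (0:ℝ)..s, f x := mul_le_mul_of_nonneg_left stepA hC_pos.le
    _ ≤ 1 - C * ((r / 2) ^ v / v) := hfinal
    _ = 1 - (2:ℝ) ^ (1 - 4 * a) * C / (4 * a - 1) * r ^ (4 * a - 1) := by rw [hrw]
end
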